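/- Let (θ_n)_{n≥1} be a strictly increasing sequence of positive real numbers with ∑_n 1/θ_n = +∞. Then for any 0 < a < b, the linear span of the power functions u ↦ u^{θ_n} is dense in L²([a,b]). -/

import Mathlib

open MeasureTheory Real intervalIntegral Finset Filter
open scoped ENNReal NNReal BoundedContinuousFunction

lemma approx_rec (a b : ℝ) (ha : 0 < a) (hab : a < b)
    (l : ℕ → ℝ) (hl : ∀ k, 0 < l k) (hinj : Function.Injective l)
    (μ : ℝ) (hμ : 0 < μ) (n : ℕ) :
    ∃ c : ℕ → ℝ, ∀ x ∈ Set.Icc a b,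
      |x ^ μ - ∑ k ∈ Finset.range n, c k * x ^ l k|
        ≤ b ^ μ * ∏ k ∈ Finset.range n, |1 - μ / l k| := by
  have hbpos : 0 < b := ha.trans hab
  induction n with
  | zero =>
    refine ⟨0, fun x hx => ?_⟩
    simp only [Finset.range_zero, Finset.sum_empty, Finset.prod_empty, mul_one, sub_zero,
      Pi.zero_apply]
    rw [abs_of_nonneg (rpow_nonneg (ha.le.trans hx.1) _)]
    exact rpow_le_rpow (ha.le.trans hx.1) hx.2 hμ.le
  | succ n ih =>
    obtain ⟨c, hc⟩ := ih
    set ν := l n with hν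
    have hνpos : 0 < ν := hl n
    by_cases hμν : μ = ν
    · refine ⟨fun k => if k = n then 1 else 0, fun x hx => ?_⟩
      have hsum : ∑ k ∈ Finset.range (n+1), (if k = n then (1:ℝ) else 0) * x ^ l k
          = x ^ ν := by
        rw [Finset.sum_range_succ, if_pos rfl, one_mul,
          Finset.sum_eq_zero (fun k hk => by
            rw [if_neg (Nat.ne_of_lt (Finset.mem_range.mp hk)), zero_mul]), zero_add]
      rw [hsum, hμν, sub_self, abs_zero]
      positivity
    · -- main case
      have hμν' : μ - ν ≠ 0 := sub_ne_zero.mpr hμν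
      have hνμ' : ν - μ ≠ 0 := sub_ne_zero.mpr (Ne.symm hμν)
      have hlk : ∀ k, k < n → l k - ν ≠ 0 := fun k hk =>
        sub_ne_zero.mpr (fun h => (Nat.ne_of_lt hk) (hinj h))
      set B : ℝ := b ^ μ * ∏ k ∈ Finset.range n, |1 - μ / l k| with hB
      have hB0 : 0 ≤ B :=
        mul_nonneg (rpow_nonneg hbpos.le _) (Finset.prod_nonneg fun _ _ => abs_nonneg _)
      set D : ℝ → ℝ := fun t => t ^ μ - ∑ k ∈ Finset.range n, c k * t ^ l k with hD
      set cc : ℕ → ℝ := fun k => c k * (μ - ν) / (l k - ν) with hcc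
      refine ⟨fun k => if k < n then cc k
        else if k = n then b ^ (μ - ν) - ∑ j ∈ Finset.range n, cc j * b ^ (l j - ν) else 0,
        fun x hx => ?_⟩
      obtain ⟨hax, hxb⟩ := hx
      have hx0 : 0 < x := ha.trans_le hax
      have huIcc : Set.uIcc x b = Set.Icc x b := Set.uIcc_of_le hxb
      have hsub : ∀ t ∈ Set.uIcc x b, 0 < t := by
        rw [huIcc]; exact fun t ht => hx0.trans_le ht.1
      have h0not : (0:ℝ) ∉ Set.uIcc x b := fun h0 => lt_irrefl 0 (hsub 0 h0)
      have hcont : ∀ r : ℝ, ContinuousOn (fun t : ℝ => t ^ r) (Set.uIcc x b) := fun r =>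
        ContinuousOn.rpow_const continuousOn_id (fun t ht => Or.inl (ne_of_gt (hsub t ht)))
      have hint : ∀ r : ℝ, IntervalIntegrable (fun t : ℝ => t ^ r) volume x b := fun r =>
        (hcont r).intervalIntegrable
      have hint2 : ∀ s : ℝ, IntervalIntegrable (fun t : ℝ => t ^ s * t ^ (-ν-1)) volume x b :=
        fun s => ((hcont s).mul (hcont _)).intervalIntegrable
      have key_int : ∀ s : ℝ, s ≠ ν →
          ∫ t in x..b, t ^ s * t ^ (-ν-1) = (b ^ (s-ν) - x ^ (s-ν)) / (s-ν) := by
        intro s hs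
        rw [intervalIntegral.integral_congr (g := fun t : ℝ => t ^ (s - ν - 1))
          (fun t ht => by rw [← Real.rpow_add (hsub t ht)]; ring_nf)]
        rw [integral_rpow (Or.inr ⟨fun h => hs (by linarith), h0not⟩)]
        have h1 : s - ν - 1 + 1 = s - ν := by ring
        rw [h1]
      have hDcont : ContinuousOn D (Set.uIcc x b) := by
        exact (hcont μ).sub
          (continuousOn_finset_sum _ (fun k _ => continuousOn_const.mul (hcont (l k))))
      have hDint : IntervalIntegrable (fun t => D t * t ^ (-ν-1)) volume x b :=
        (hDcont.mul (hcont _)).intervalIntegrable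
      have hIsum : ∫ t in x..b, D t * t ^ (-ν-1)
          = (b ^ (μ-ν) - x ^ (μ-ν)) / (μ-ν)
            - ∑ k ∈ Finset.range n, c k * ((b ^ (l k - ν) - x ^ (l k - ν)) / (l k - ν)) := by
        have h1 : (fun t => D t * t ^ (-ν-1))
            = fun t => t ^ μ * t ^ (-ν-1)
              - ∑ k ∈ Finset.range n, c k * (t ^ l k * t ^ (-ν-1)) := by
          funext t
          simp only [hD, sub_mul, Finset.sum_mul, mul_assoc]
        have hsint : IntervalIntegrable
            (fun t : ℝ => ∑ k ∈ Finset.range n, c k * (t ^ l k * t ^ (-ν-1))) volume x b :=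
          (continuousOn_finset_sum _ (fun k _ =>
            continuousOn_const.mul ((hcont (l k)).mul (hcont _)))).intervalIntegrable
        have h2 : ∫ t in x..b, ∑ k ∈ Finset.range n, c k * (t ^ l k * t ^ (-ν-1))
            = ∑ k ∈ Finset.range n, c k * ((b ^ (l k - ν) - x ^ (l k - ν)) / (l k - ν)) := by
          rw [intervalIntegral.integral_finset_sum (f := fun k t => c k * (t ^ l k * t ^ (-ν-1))) (fun k _ =>
            (continuousOn_const.mul ((hcont (l k)).mul (hcont (-ν-1)))).intervalIntegrable)]
          refine Finset.sum_congr rfl (fun k hk => ?_)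
          rw [intervalIntegral.integral_const_mul, key_int (l k)
            (sub_ne_zero.mp (hlk k (Finset.mem_range.mp hk)))]
        rw [h1, intervalIntegral.integral_sub (hint2 μ) hsint, h2, key_int μ hμν]
      -- the new remainder identity
      have hxν : (0:ℝ) < x ^ ν := rpow_pos_of_pos hx0 ν
      have hbν : (0:ℝ) < b ^ ν := rpow_pos_of_pos hbpos ν
      have key1 : x ^ μ - ∑ k ∈ Finset.range (n+1),
          (if k < n then cc k
            else if k = n then b ^ (μ - ν) - ∑ j ∈ Finset.range n, cc j * b ^ (l j - ν) else 0)
            * x ^ l k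
          = (ν - μ) * x ^ ν * ∫ t in x..b, D t * t ^ (-ν-1) := by
        rw [hIsum]
        have hsum1 : ∑ k ∈ Finset.range (n+1),
            (if k < n then cc k
              else if k = n then b ^ (μ - ν) - ∑ j ∈ Finset.range n, cc j * b ^ (l j - ν) else 0)
              * x ^ l k
            = (∑ k ∈ Finset.range n, cc k * x ^ l k)
              + (b ^ (μ - ν) - ∑ j ∈ Finset.range n, cc j * b ^ (l j - ν)) * x ^ ν := by
          rw [Finset.sum_range_succ, if_neg (lt_irrefl n), if_pos rfl]
          congr 1
          exact Finset.sum_congr rfl (fun k hk => by rw [if_pos (Finset.mem_range.mp hk)])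
        rw [hsum1]
        simp only [Real.rpow_sub hx0, Real.rpow_sub hbpos]
        have hterm1 : (ν - μ) * x ^ ν * ((b ^ μ / b ^ ν - x ^ μ / x ^ ν) / (μ - ν))
            = x ^ μ - b ^ μ / b ^ ν * x ^ ν := by
          field_simp
          ring
        have hterm2 : ∀ k ∈ Finset.range n,
            (ν - μ) * x ^ ν * (c k * ((b ^ l k / b ^ ν - x ^ l k / x ^ ν) / (l k - ν)))
            = cc k * x ^ l k - cc k * (b ^ l k / b ^ ν) * x ^ ν := by
          intro k hk
          have h := hlk k (Finset.mem_range.mp hk)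
          simp only [hcc]
          field_simp
          ring
        rw [mul_sub, Finset.mul_sum, hterm1, Finset.sum_congr rfl hterm2,
          Finset.sum_sub_distrib, sub_mul, Finset.sum_mul]
        simp only [div_eq_mul_inv]
        ring_nf
      -- the bound
      have hxbν : x ^ ν ≤ b ^ ν := rpow_le_rpow hx0.le hxb hνpos.le
      have hEbound : 0 ≤ x ^ ν * b ^ (-ν) ∧ x ^ ν * b ^ (-ν) ≤ 1 := by
        rw [Real.rpow_neg hbpos.le]
        constructor
        · positivity
        · rw [← div_eq_mul_inv, div_le_one hbν]
          exact hxbν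
      have hintc : ∫ t in x..b, B * t ^ (-ν-1) = B * ((x ^ (-ν) - b ^ (-ν)) / ν) := by
        rw [intervalIntegral.integral_const_mul,
          integral_rpow (Or.inr ⟨fun h => hνpos.ne' (by linarith), h0not⟩)]
        have h1 : -ν - 1 + 1 = -ν := by ring
        rw [h1]
        congr 1
        rw [div_neg, ← neg_div, neg_sub]
      have habs : |∫ t in x..b, D t * t ^ (-ν-1)| ≤ B * ((x ^ (-ν) - b ^ (-ν)) / ν) := by
        rw [← hintc]
        refine (intervalIntegral.abs_integral_le_integral_abs hxb).trans ?_
        refine intervalIntegral.integral_mono_on hxb hDint.abs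
          ((hint (-ν-1)).const_mul B) (fun t ht => ?_)
        have ht0 : (0:ℝ) ≤ t := (hx0.trans_le ht.1).le
        rw [abs_mul, abs_of_nonneg (rpow_nonneg ht0 _)]
        exact mul_le_mul_of_nonneg_right (hc t ⟨hax.trans ht.1, ht.2⟩) (rpow_nonneg ht0 _)
      have key2 : |(ν - μ) * x ^ ν * ∫ t in x..b, D t * t ^ (-ν-1)| ≤ B * |1 - μ / ν| := by
        rw [abs_mul, abs_mul, abs_of_nonneg hxν.le]
        have h1 : |ν - μ| * x ^ ν * (B * ((x ^ (-ν) - b ^ (-ν)) / ν))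
            ≤ B * |1 - μ / ν| := by
          have hxx : x ^ ν * x ^ (-ν) = 1 := by
            rw [← Real.rpow_add hx0]
            simp
          have h2 : x ^ ν * (x ^ (-ν) - b ^ (-ν)) = 1 - x ^ ν * b ^ (-ν) := by
            rw [mul_sub, hxx]
          have h3 : |ν - μ| * x ^ ν * (B * ((x ^ (-ν) - b ^ (-ν)) / ν))
              = (|ν - μ| / ν) * B * (x ^ ν * (x ^ (-ν) - b ^ (-ν))) := by
            field_simp
          rw [h3, h2]
          have h4 : |ν - μ| / ν * B * (1 - x ^ ν * b ^ (-ν)) ≤ |ν - μ| / ν * B * 1 :=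
            mul_le_mul_of_nonneg_left (by linarith [hEbound.1]) (by positivity)
          refine h4.trans_eq ?_
          rw [mul_one]
          have h5 : (1 : ℝ) - μ / ν = (ν - μ) / ν := by field_simp
          rw [h5, abs_div, abs_of_pos hνpos]
          ring
        refine le_trans ?_ h1
        rw [mul_assoc, mul_assoc]
        refine mul_le_mul_of_nonneg_left ?_ (abs_nonneg _)
        exact mul_le_mul_of_nonneg_left habs hxν.le
      rw [key1]
      calc |(ν - μ) * x ^ ν * ∫ t in x..b, D t * t ^ (-ν-1)| ≤ B * |1 - μ / ν| := key2
        _ = b ^ μ * ∏ k ∈ Finset.range (n+1), |1 - μ / l k| := by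
            rw [Finset.prod_range_succ, hB, mul_assoc]

lemma muntz_prod_div (l : ℕ → ℝ) (hl : ∀ k, 0 < l k)
    (hdiv : ¬ Summable (fun k : ℕ => 1 / l k))
    (hunb : Tendsto l atTop atTop) (μ : ℝ) (hμ : 0 < μ) :
    Tendsto (fun n => ∏ k ∈ Finset.range n, |1 - μ / l k|) atTop (nhds 0) := by
  obtain ⟨N, hN⟩ := (hunb.eventually_ge_atTop (2*μ)).exists_forall_of_atTop
  set C := ∏ k ∈ Finset.range N, |1 - μ / l k| with hC
  have hC0 : 0 ≤ C := Finset.prod_nonneg fun _ _ => abs_nonneg _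
  have hsumtend : Tendsto (fun n => ∑ k ∈ Finset.range n, 1 / l k) atTop atTop :=
    (not_summable_iff_tendsto_nat_atTop_of_nonneg
      (fun k => le_of_lt (by exact div_pos one_pos (hl k)))).mp hdiv
  have hStend : Tendsto (fun n => ∑ k ∈ Finset.Ico N n, 1 / l k) atTop atTop := by
    have h1 : Tendsto (fun n => (∑ k ∈ Finset.range n, 1 / l k)
        - ∑ k ∈ Finset.range N, 1 / l k) atTop atTop :=
      tendsto_atTop_add_const_right _ _ hsumtend
    refine h1.congr' ?_
    filter_upwards [eventually_ge_atTop N] with n hn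
    rw [Finset.sum_Ico_eq_sub _ hn]
  have hbound : ∀ᶠ n in atTop, ∏ k ∈ Finset.range n, |1 - μ / l k|
      ≤ C * Real.exp (-(μ * ∑ k ∈ Finset.Ico N n, 1 / l k)) := by
    filter_upwards [eventually_ge_atTop N] with n hn
    rw [← Finset.prod_range_mul_prod_Ico _ hn]
    have hfac : ∀ k ∈ Finset.Ico N n, |1 - μ / l k| ≤ Real.exp (-(μ / l k)) := by
      intro k hk
      have h2μ : 2*μ ≤ l k := hN k (Finset.mem_Ico.mp hk).1
      have hlt : μ / l k < 1 := by
        rw [div_lt_one (hl k)]; linarith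
      rw [abs_of_nonneg (by linarith : (0:ℝ) ≤ 1 - μ / l k)]
      have := Real.add_one_le_exp (-(μ / l k))
      linarith
    refine mul_le_mul_of_nonneg_left ?_ hC0
    calc ∏ k ∈ Finset.Ico N n, |1 - μ / l k|
        ≤ ∏ k ∈ Finset.Ico N n, Real.exp (-(μ / l k)) :=
          Finset.prod_le_prod (fun _ _ => abs_nonneg _) hfac
      _ = Real.exp (∑ k ∈ Finset.Ico N n, -(μ / l k)) := (Real.exp_sum _ _).symm
      _ = Real.exp (-(μ * ∑ k ∈ Finset.Ico N n, 1 / l k)) := by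
          congr 1
          rw [Finset.mul_sum, ← Finset.sum_neg_distrib]
          exact Finset.sum_congr rfl fun k _ => by rw [mul_one_div]
  have hzero : Tendsto (fun n => C * Real.exp (-(μ * ∑ k ∈ Finset.Ico N n, 1 / l k)))
      atTop (nhds 0) := by
    rw [show (0:ℝ) = C * 0 by ring]
    have h1 : Tendsto (fun n => -(μ * ∑ k ∈ Finset.Ico N n, 1 / l k)) atTop atBot :=
      Filter.tendsto_neg_atBot_iff.mpr (hStend.const_mul_atTop hμ)
    exact (Real.tendsto_exp_atBot.comp h1).const_mul C
  refine squeeze_zero' (Filter.Eventually.of_forall fun n => Finset.prod_nonneg fun _ _ => abs_nonneg _)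
    hbound hzero

lemma muntz_prod_lim (l : ℕ → ℝ) (L : ℝ)
    (hlim : Tendsto l atTop (nhds L)) (μ : ℝ) (hμ : 0 < μ) (hμ2 : μ < 2 * L) :
    Tendsto (fun n => ∏ k ∈ Finset.range n, |1 - μ / l k|) atTop (nhds 0) := by
  have hL0 : 0 < L := by linarith
  set r := |1 - μ / L| with hr
  have hr1 : r < 1 := by
    rw [hr, abs_lt]
    constructor
    · have : μ / L < 2 := by rw [div_lt_iff₀ hL0]; linarith
      linarith
    · have : 0 < μ / L := div_pos hμ hL0
      linarith
  set q := (1 + r) / 2 with hq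
  have hrq : r < q := by rw [hq]; have := abs_nonneg (1 - μ / L); linarith [hr1]
  have hq1 : q < 1 := by rw [hq]; linarith
  have hq0 : 0 ≤ q := by have : 0 ≤ r := hr ▸ abs_nonneg (1 - μ / L); rw [hq]; linarith
  have htend : Tendsto (fun k => |1 - μ / l k|) atTop (nhds r) :=
    ((tendsto_const_nhds.div hlim hL0.ne').const_sub 1).abs
  obtain ⟨N, hN⟩ := (htend.eventually_le_const hrq).exists_forall_of_atTop
  set C := ∏ k ∈ Finset.range N, |1 - μ / l k| with hC
  have hC0 : 0 ≤ C := Finset.prod_nonneg fun _ _ => abs_nonneg _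
  have hbound : ∀ᶠ n in atTop, ∏ k ∈ Finset.range n, |1 - μ / l k| ≤ C * q ^ (n - N) := by
    filter_upwards [eventually_ge_atTop N] with n hn
    rw [← Finset.prod_range_mul_prod_Ico _ hn]
    refine mul_le_mul_of_nonneg_left ?_ hC0
    calc ∏ k ∈ Finset.Ico N n, |1 - μ / l k|
        ≤ ∏ _k ∈ Finset.Ico N n, q :=
          Finset.prod_le_prod (fun _ _ => abs_nonneg _)
            (fun k hk => hN k (Finset.mem_Ico.mp hk).1)
      _ = q ^ (n - N) := by rw [Finset.prod_const, Nat.card_Ico]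
  have hzero : Tendsto (fun n : ℕ => C * q ^ (n - N)) atTop (nhds 0) := by
    rw [show (0:ℝ) = C * 0 by ring]
    exact ((tendsto_pow_atTop_nhds_zero_of_lt_one hq0 hq1).comp
      (tendsto_sub_atTop_nat N)).const_mul C
  exact squeeze_zero' (Filter.Eventually.of_forall fun n =>
    Finset.prod_nonneg fun _ _ => abs_nonneg _) hbound hzero

lemma muntz_finite (a b : ℝ) : IsFiniteMeasure (volume.restrict (Set.Icc a b)) :=
  ⟨by rw [Measure.restrict_apply_univ, Real.volume_Icc]; exact ENNReal.ofReal_lt_top⟩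

lemma muntz_memℒp (a b m : ℝ) (ha : 0 < a) (hm : 0 ≤ m) :
    MemLp (fun u : ℝ => u ^ m) 2 (volume.restrict (Set.Icc a b)) := by
  haveI := muntz_finite a b
  refine MemLp.of_bound (by measurability) (max (b ^ m) 1) ?_
  filter_upwards [ae_restrict_mem measurableSet_Icc] with x hx
  have hx0 : 0 < x := ha.trans_le hx.1
  rw [Real.norm_eq_abs, abs_of_nonneg (rpow_nonneg hx0.le m)]
  exact le_max_of_le_left (rpow_le_rpow hx0.le hx.2 hm)

lemma muntz_toLp_sum {α : Type*} [MeasurableSpace α] (ν : Measure α) (n : ℕ)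
    (f : ℕ → α → ℝ) (hf : ∀ k, MemLp (f k) 2 ν)
    (hs : MemLp (fun x => ∑ k ∈ Finset.range n, f k x) 2 ν) :
    hs.toLp _ = ∑ k ∈ Finset.range n, (hf k).toLp (f k) := by
  induction n with
  | zero => simp only [Finset.range_zero, Finset.sum_empty]; exact MemLp.toLp_zero _
  | succ n ih =>
    rw [Finset.sum_range_succ]
    have h1 : MemLp (fun x => ∑ k ∈ Finset.range n, f k x) 2 ν :=
      memLp_finset_sum _ (fun k _ => hf k)
    have h2 : (fun x => ∑ k ∈ Finset.range (n+1), f k x)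
        = (fun x => ∑ k ∈ Finset.range n, f k x) + f n := by
      funext x; simp [Finset.sum_range_succ]
    rw [show hs.toLp _ = (h1.add (hf n)).toLp _ from by congr 1]
    rw [MemLp.toLp_add, ih h1]
    exact h1

lemma muntz_dist_le (a b : ℝ) (ha : 0 < a) (hab : a < b) (f g : ℝ → ℝ)
    (hf : MemLp f 2 (volume.restrict (Set.Icc a b)))
    (hg : MemLp g 2 (volume.restrict (Set.Icc a b)))
    (C : ℝ) (hC : 0 ≤ C) (hbound : ∀ x ∈ Set.Icc a b, |f x - g x| ≤ C) :
    ‖hf.toLp f - hg.toLp g‖ ≤ (b - a) ^ (2⁻¹ : ℝ) * C := by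
  rw [← MemLp.toLp_sub, Lp.norm_toLp]
  have h1 : eLpNorm (f - g) 2 (volume.restrict (Set.Icc a b))
      ≤ (volume.restrict (Set.Icc a b)) Set.univ ^ ((2:ℝ≥0∞).toReal)⁻¹ * ENNReal.ofReal C := by
    refine eLpNorm_le_of_ae_bound ?_
    filter_upwards [ae_restrict_mem measurableSet_Icc] with x hx
    rw [Pi.sub_apply, Real.norm_eq_abs]
    exact hbound x hx
  have h2 : ((volume.restrict (Set.Icc a b)) Set.univ ^ ((2:ℝ≥0∞).toReal)⁻¹
      * ENNReal.ofReal C).toReal = (b - a) ^ (2⁻¹ : ℝ) * C := by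
    rw [Measure.restrict_apply_univ, Real.volume_Icc, ENNReal.toReal_mul,
      ENNReal.toReal_ofReal hC]
    congr 1
    rw [← ENNReal.toReal_rpow, ENNReal.toReal_ofReal (by linarith)]
    norm_num
  calc (eLpNorm (f - g) 2 (volume.restrict (Set.Icc a b))).toReal
      ≤ ((volume.restrict (Set.Icc a b)) Set.univ ^ ((2:ℝ≥0∞).toReal)⁻¹
          * ENNReal.ofReal C).toReal := by
        refine ENNReal.toReal_mono ?_ h1
        refine ENNReal.mul_ne_top ?_ ENNReal.ofReal_ne_top
        refine ENNReal.rpow_ne_top_of_nonneg (by positivity) ?_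
        rw [Measure.restrict_apply_univ, Real.volume_Icc]
        exact ENNReal.ofReal_ne_top
    _ = _ := h2

lemma muntz_mem_closure (a b : ℝ) (ha : 0 < a) (hab : a < b)
    (l : ℕ → ℝ) (hl : ∀ k, 0 < l k) (hinj : Function.Injective l)
    (K : Submodule ℝ (Lp ℝ 2 (volume.restrict (Set.Icc a b))))
    (hKc : IsClosed (K : Set (Lp ℝ 2 (volume.restrict (Set.Icc a b)))))
    (hKl : ∀ k, ((muntz_memℒp a b (l k) ha (hl k).le).toLp _) ∈ K)
    (μ : ℝ) (hμ : 0 < μ)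
    (hprod : Tendsto (fun n => ∏ k ∈ Finset.range n, |1 - μ / l k|) atTop (nhds 0)) :
    (muntz_memℒp a b μ ha hμ.le).toLp _ ∈ K := by
  have hbpos : 0 < b := ha.trans hab
  show MemLp.toLp _ _ ∈ (K : Set (Lp ℝ 2 (volume.restrict (Set.Icc a b))))
  rw [← hKc.closure_eq, Metric.mem_closure_iff]
  intro ε hε
  have h0 : Tendsto (fun n => (b - a) ^ (2⁻¹:ℝ)
      * (b ^ μ * ∏ k ∈ Finset.range n, |1 - μ / l k|)) atTop (nhds 0) := by
    have h1 := ((hprod.const_mul (b ^ μ)).const_mul ((b - a) ^ (2⁻¹:ℝ)))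
    simpa using h1
  obtain ⟨n, hn⟩ := (h0.eventually_lt_const hε).exists
  obtain ⟨c, hc⟩ := approx_rec a b ha hab l hl hinj μ hμ n
  set g : ℝ → ℝ := fun x => ∑ k ∈ Finset.range n, c k * x ^ l k with hg
  have hgk : ∀ k : ℕ, MemLp (fun x : ℝ => c k * x ^ l k) 2 (volume.restrict (Set.Icc a b)) :=
    fun k => (muntz_memℒp a b (l k) ha (hl k).le).const_mul (c k)
  have hgmem : MemLp g 2 (volume.restrict (Set.Icc a b)) :=
    memLp_finset_sum _ (fun k _ => hgk k)
  have hgK : hgmem.toLp g ∈ K := by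
    rw [muntz_toLp_sum _ n _ hgk hgmem]
    refine Submodule.sum_mem K (fun k _ => ?_)
    have h2 : (hgk k).toLp _ = c k • (muntz_memℒp a b (l k) ha (hl k).le).toLp _ :=
      MemLp.toLp_const_smul (c k) _
    rw [h2]
    exact Submodule.smul_mem K _ (hKl k)
  refine ⟨hgmem.toLp g, hgK, ?_⟩
  rw [dist_eq_norm]
  calc ‖(muntz_memℒp a b μ ha hμ.le).toLp _ - hgmem.toLp g‖
      ≤ (b - a) ^ (2⁻¹:ℝ) * (b ^ μ * ∏ k ∈ Finset.range n, |1 - μ / l k|) :=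
        muntz_dist_le a b ha hab _ g _ hgmem _ (by positivity) hc
    _ < ε := hn

/-- Müntz theorem in `L²`: if `θ_n > 0` is strictly increasing with `∑ 1/θ_n = ∞`,
then for `0 < a < b` the span of the power functions `u ↦ u^{θ_n}` is dense in
`L²([a,b])`. -/
theorem stmt3
    (θ : ℕ → ℝ) (hpos : ∀ n, 0 < θ n) (hmono : StrictMono θ)
    (hdiv : ¬ Summable (fun n : ℕ => 1 / θ n))
    (a b : ℝ) (ha : 0 < a) (hab : a < b)
    (hmem : ∀ n, MemLp (fun u : ℝ => u ^ θ n) 2 (volume.restrict (Set.Icc a b))) :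
    Dense
      (↑(Submodule.span ℝ
          (Set.range fun n => MemLp.toLp (fun u : ℝ => u ^ θ n) (hmem n))) :
        Set (Lp ℝ 2 (volume.restrict (Set.Icc a b)))) := by
  have hbpos : 0 < b := ha.trans hab
  haveI : IsFiniteMeasure (volume.restrict (Set.Icc a b)) := muntz_finite a b
  set V := Submodule.span ℝ
      (Set.range fun n => MemLp.toLp (fun u : ℝ => u ^ θ n) (hmem n)) with hV
  set K := V.topologicalClosure with hK
  have hKc : IsClosed (K : Set (Lp ℝ 2 (volume.restrict (Set.Icc a b)))) :=
    V.isClosed_topologicalClosure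
  have hbase : ∀ n : ℕ, ((muntz_memℒp a b (θ n) ha (hpos n).le).toLp
      (fun u : ℝ => u ^ θ n)) ∈ K := by
    intro n
    exact Submodule.le_topologicalClosure V (Submodule.subset_span ⟨n, rfl⟩)
  have hall : ∀ μm : ℝ, ∀ hμm : 0 < μm,
      (muntz_memℒp a b μm ha hμm.le).toLp (fun u : ℝ => u ^ μm) ∈ K := by
    by_cases hbdd : BddAbove (Set.range θ)
    · set L := ⨆ n, θ n with hL
      have hLlim : Tendsto θ atTop (nhds L) := tendsto_atTop_ciSup hmono.monotone hbdd
      have hL0 : 0 < L := lt_of_lt_of_le (hpos 0) (le_ciSup hbdd 0)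
      have main : ∀ j : ℕ, ∀ μm : ℝ, 0 < μm → μm < (3/2:ℝ)^j * L →
          ∀ hμm : 0 < μm, (muntz_memℒp a b μm ha hμm.le).toLp (fun u : ℝ => u ^ μm) ∈ K := by
        intro j
        induction j with
        | zero =>
          intro μm h1 h2 hμm
          refine muntz_mem_closure a b ha hab θ hpos hmono.injective K hKc hbase μm hμm ?_
          refine muntz_prod_lim θ L hLlim μm hμm ?_
          rw [pow_zero, one_mul] at h2
          linarith
        | succ j ih =>
          intro μm h1 h2 hμm
          set cj := (3/2:ℝ)^j * L with hcj
          have hcj0 : 0 < cj := by positivity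
          set l' : ℕ → ℝ := fun i => cj * (1 - 1/((i:ℝ)+2)) with hl'
          have hfrac : ∀ i : ℕ, 0 < 1/((i:ℝ)+2) ∧ 1/((i:ℝ)+2) ≤ 1/2 := by
            intro i
            constructor
            · positivity
            · rw [div_le_div_iff₀ (by positivity) (by norm_num)]
              have : (0:ℝ) ≤ (i:ℝ) := Nat.cast_nonneg i
              linarith
          have hl'pos : ∀ i, 0 < l' i := by
            intro i
            have h := hfrac i
            have : 0 < 1 - 1/((i:ℝ)+2) := by linarith [h.2]
            positivity
          have hl'mono : StrictMono l' := by
            intro i j hij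
            have hij' : (i:ℝ) < (j:ℝ) := Nat.cast_lt.mpr hij
            refine mul_lt_mul_of_pos_left ?_ hcj0
            have h1' : (0:ℝ) < (i:ℝ) + 2 := by positivity
            have : 1/((j:ℝ)+2) < 1/((i:ℝ)+2) :=
              one_div_lt_one_div_of_lt h1' (by linarith)
            linarith
          have hl'lt : ∀ i, l' i < cj := by
            intro i
            have h := (hfrac i).1
            show cj * (1 - 1/((i:ℝ)+2)) < cj
            nlinarith [mul_pos hcj0 h]
          have hl'lim : Tendsto l' atTop (nhds cj) := by
            have h3 : Tendsto (fun i : ℕ => ((i:ℝ)+2)) atTop atTop :=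
              tendsto_atTop_add_const_right atTop 2 tendsto_natCast_atTop_atTop
            have h4 : Tendsto (fun i : ℕ => 1/((i:ℝ)+2)) atTop (nhds 0) := by
              have h3' : Tendsto (fun i : ℕ => ((i:ℝ)+2)⁻¹) atTop (nhds 0) := h3.inv_tendsto_atTop
              simpa [one_div] using h3'
            have h5 : Tendsto (fun i : ℕ => (1:ℝ) - 1/((i:ℝ)+2)) atTop (nhds (1 - 0)) :=
              Tendsto.sub tendsto_const_nhds h4
            have h6 := h5.const_mul cj
            simpa [hl', one_div] using h6
          refine muntz_mem_closure a b ha hab l' hl'pos hl'mono.injective K hKc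
            (fun k => ih (l' k) (hl'pos k) (hl'lt k) (hl'pos k)) μm hμm ?_
          refine muntz_prod_lim l' cj hl'lim μm hμm ?_
          have h6 : μm < 3/2 * cj := by
            rw [hcj]
            calc μm < (3/2:ℝ)^(j+1) * L := h2
              _ = 3/2 * ((3/2:ℝ)^j * L) := by ring
          linarith
      intro μm hμm
      obtain ⟨j, hj⟩ := pow_unbounded_of_one_lt (μm / L) (by norm_num : (1:ℝ) < 3/2)
      exact main j μm hμm (by rw [← div_lt_iff₀ hL0] at *; exact hj) hμm
    · intro μm hμm
      have hunb : Tendsto θ atTop atTop := by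
        apply tendsto_atTop_atTop_of_monotone hmono.monotone
        intro x
        obtain ⟨y, hy, hxy⟩ := not_bddAbove_iff.mp hbdd x
        obtain ⟨n, rfl⟩ := hy
        exact ⟨n, hxy.le⟩
      exact muntz_mem_closure a b ha hab θ hpos hmono.injective K hKc hbase μm hμm
        (muntz_prod_div θ hpos hdiv hunb μm hμm)
  -- bounded continuous functions are in K
  have hBCF : ∀ f : ℝ →ᵇ ℝ,
      (BoundedContinuousFunction.toLp (E := ℝ) 2 (volume.restrict (Set.Icc a b)) ℝ f) ∈ K := by
    intro f
    have hfmem : MemLp (⇑f) 2 (volume.restrict (Set.Icc a b)) :=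
      MemLp.of_bound f.continuous.aestronglyMeasurable ‖f‖
        (Filter.Eventually.of_forall (fun x => f.norm_coe_le_norm x))
    have heq : BoundedContinuousFunction.toLp (E := ℝ) 2 (volume.restrict (Set.Icc a b)) ℝ f
        = hfmem.toLp f := by
      apply Lp.ext
      exact (BoundedContinuousFunction.coeFn_toLp 2 (volume.restrict (Set.Icc a b)) ℝ f).trans
        (hfmem.coeFn_toLp).symm
    rw [heq]
    show hfmem.toLp _ ∈ (K : Set (Lp ℝ 2 (volume.restrict (Set.Icc a b))))
    rw [← hKc.closure_eq, Metric.mem_closure_iff]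
    intro ε hε
    set Cb := (b - a) ^ (2⁻¹:ℝ) * b + 1 with hCb
    have hba0 : (0:ℝ) ≤ (b - a) ^ (2⁻¹:ℝ) := rpow_nonneg (by linarith) _
    have hCb0 : 0 < Cb := by positivity
    set ε' := ε / Cb with hε'
    have hε'0 : 0 < ε' := div_pos hε hCb0
    have hgc : ContinuousOn (fun x : ℝ => f x / x) (Set.Icc a b) :=
      (f.continuous.continuousOn).div continuousOn_id (fun x hx => (ha.trans_le hx.1).ne')
    obtain ⟨p, hp⟩ := exists_polynomial_near_of_continuousOn a b _ hgc ε' hε'0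
    set Q : ℝ → ℝ := fun x => ∑ i ∈ Finset.range (p.natDegree + 1),
      p.coeff i * x ^ ((i : ℝ) + 1) with hQ
    have hQk : ∀ i : ℕ, MemLp (fun x : ℝ => p.coeff i * x ^ ((i:ℝ)+1)) 2
        (volume.restrict (Set.Icc a b)) :=
      fun i => (muntz_memℒp a b _ ha (by positivity)).const_mul _
    have hQmem : MemLp Q 2 (volume.restrict (Set.Icc a b)) :=
      memLp_finset_sum _ (fun i _ => hQk i)
    have hQK : hQmem.toLp Q ∈ K := by
      rw [muntz_toLp_sum _ _ _ hQk hQmem]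
      refine Submodule.sum_mem K (fun i _ => ?_)
      have h2 : (hQk i).toLp _
          = p.coeff i • (muntz_memℒp a b ((i:ℝ)+1) ha (by positivity)).toLp
              (fun u : ℝ => u ^ ((i:ℝ)+1)) :=
        MemLp.toLp_const_smul (p.coeff i) (muntz_memℒp a b ((i:ℝ)+1) ha (by positivity))
      rw [h2]
      exact Submodule.smul_mem K _ (hall ((i:ℝ)+1) (by positivity))
    have hfQ : ∀ x ∈ Set.Icc a b, |f x - Q x| ≤ b * ε' := by
      intro x hx
      have hx0 : 0 < x := ha.trans_le hx.1
      have hQx : Q x = x * p.eval x := by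
        rw [hQ]
        simp only []
        rw [Polynomial.eval_eq_sum_range, Finset.mul_sum]
        refine Finset.sum_congr rfl (fun i _ => ?_)
        rw [show ((i:ℝ)+1) = ((i+1 : ℕ) : ℝ) by push_cast; ring, Real.rpow_natCast]
        ring
      rw [hQx]
      calc |f x - x * p.eval x| = |x| * |f x / x - p.eval x| := by
            rw [← abs_mul]
            congr 1
            field_simp
          _ ≤ b * ε' :=
            mul_le_mul (by rw [abs_of_pos hx0]; exact hx.2)
              (by rw [abs_sub_comm]; exact (hp x hx).le) (abs_nonneg _) hbpos.le
    refine ⟨hQmem.toLp Q, hQK, ?_⟩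
    rw [dist_eq_norm]
    calc ‖hfmem.toLp f - hQmem.toLp Q‖ ≤ (b-a)^(2⁻¹:ℝ) * (b * ε') :=
          muntz_dist_le a b ha hab (⇑f) Q hfmem hQmem (b * ε') (by positivity) hfQ
      _ = ((b-a)^(2⁻¹:ℝ) * b) * ε' := by ring
      _ < Cb * ε' := by
          refine mul_lt_mul_of_pos_right ?_ hε'0
          rw [hCb]; linarith
      _ = ε := by rw [hε']; field_simp
  -- conclude
  haveI : Fact ((1:ℝ≥0∞) ≤ 2) := ⟨one_le_two⟩
  haveI : (volume.restrict (Set.Icc a b)).WeaklyRegular :=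
    MeasureTheory.Measure.WeaklyRegular.restrict_of_measure_ne_top
      (by rw [Real.volume_Icc]; exact ENNReal.ofReal_ne_top)
  have hdr : DenseRange
      (BoundedContinuousFunction.toLp (E := ℝ) 2 (volume.restrict (Set.Icc a b)) ℝ) :=
    BoundedContinuousFunction.toLp_denseRange _ _ ℝ (by simp)
  have hKuniv : (K : Set (Lp ℝ 2 (volume.restrict (Set.Icc a b)))) = Set.univ := by
    apply Set.eq_univ_of_univ_subset
    calc Set.univ
        = closure (Set.range
            (BoundedContinuousFunction.toLp (E := ℝ) 2 (volume.restrict (Set.Icc a b)) ℝ)) :=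
          hdr.closure_eq.symm
      _ ⊆ closure (K : Set (Lp ℝ 2 (volume.restrict (Set.Icc a b)))) :=
          closure_mono (Set.range_subset_iff.mpr hBCF)
      _ = K := hKc.closure_eq
  rw [dense_iff_closure_eq, ← Submodule.topologicalClosure_coe]
  exact hKuniv
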